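/- Let $\ell \ge 2$, $q > 1$, and let $Y$ be a nonnegative random variable with $0 < E[Y^q] < \infty$ and $E[Y] = 1$, satisfying the equality in law $\ell Y = \sum_{j=0}^{\ell-1} W_j Y(j)$, where $W_0,\dots,W_{\ell-1}$ are i.i.d. copies of a nonnegative random variable $W$ with $E[W]=1$ and $E[W^q]<\infty$, the $Y(j)$ are i.i.d. copies of $Y$, and all $2\ell$ variables are independent. Then $E[W^q] < \ell^{q-1}$. -/

import Mathlib

open MeasureTheory ProbabilityTheory Finset

private lemma sum_rpow_le_rpow_sum {n : ℕ} {q : ℝ} (hq : 1 ≤ q) (x : Fin n → ℝ)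
    (hx : ∀ j, 0 ≤ x j) : ∑ j, x j ^ q ≤ (∑ j, x j) ^ q := by
  have hq0 : q ≠ 0 := by linarith
  set s := ∑ j, x j with hs
  have hs0 : 0 ≤ s := Finset.sum_nonneg fun j _ => hx j
  rcases hs0.eq_or_lt with h | h
  · have hall : ∀ j ∈ Finset.univ, x j = (0:ℝ) :=
      (Finset.sum_eq_zero_iff_of_nonneg (fun j _ => hx j)).1 h.symm
    have h1 : ∑ j, x j ^ q = 0 := Finset.sum_eq_zero fun j hj => by
      rw [hall j hj, Real.zero_rpow hq0]
    rw [h1, ← h, Real.zero_rpow hq0]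
  · have key : ∀ j : Fin n, x j ^ q ≤ x j * s ^ (q - 1) := by
      intro j
      have hxs : x j ≤ s := Finset.single_le_sum (fun k _ => hx k) (Finset.mem_univ j)
      have h2 : x j ^ q = x j * x j ^ (q - 1) := by
        have := Real.rpow_add' (hx j) (show (1:ℝ) + (q - 1) ≠ 0 by
          rw [show (1:ℝ) + (q-1) = q by ring]; exact hq0)
        rw [show (1:ℝ) + (q-1) = q by ring] at this
        rw [this, Real.rpow_one]
      rw [h2]
      exact mul_le_mul_of_nonneg_left
        (Real.rpow_le_rpow (hx j) hxs (by linarith)) (hx j)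
    calc ∑ j, x j ^ q ≤ ∑ j, x j * s ^ (q-1) := Finset.sum_le_sum fun j _ => key j
      _ = s * s ^ (q-1) := by rw [← Finset.sum_mul]
      _ = s ^ q := by
          nth_rewrite 1 [← Real.rpow_one s]
          rw [← Real.rpow_add h]; norm_num

private lemma sum_rpow_lt_rpow_sum {n : ℕ} {q : ℝ} (hq : 1 < q) (x : Fin n → ℝ)
    (hx : ∀ j, 0 ≤ x j) {i j : Fin n} (hij : i ≠ j) (hxi : 0 < x i) (hxj : 0 < x j) :
    ∑ k, x k ^ q < (∑ k, x k) ^ q := by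
  have hq0 : q ≠ 0 := by linarith
  set s := ∑ k, x k with hs
  have hxis : x i < s := by
    have h1 : s = x i + ∑ k ∈ Finset.univ.erase i, x k :=
      (Finset.add_sum_erase _ _ (Finset.mem_univ i)).symm
    have hj' : x j ≤ ∑ k ∈ Finset.univ.erase i, x k :=
      Finset.single_le_sum (fun k _ => hx k)
        (Finset.mem_erase.2 ⟨hij.symm, Finset.mem_univ j⟩)
    linarith
  have hspos : 0 < s := hxi.trans hxis
  have pow_eq : ∀ k : Fin n, x k ^ q = x k * x k ^ (q - 1) := by
    intro k
    have := Real.rpow_add' (hx k) (show (1:ℝ) + (q - 1) ≠ 0 by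
      rw [show (1:ℝ) + (q-1) = q by ring]; exact hq0)
    rw [show (1:ℝ) + (q-1) = q by ring] at this
    rw [this, Real.rpow_one]
  have key : ∀ k : Fin n, x k ^ q ≤ x k * s ^ (q - 1) := by
    intro k
    have hxs : x k ≤ s := Finset.single_le_sum (fun m _ => hx m) (Finset.mem_univ k)
    rw [pow_eq k]
    exact mul_le_mul_of_nonneg_left (Real.rpow_le_rpow (hx k) hxs (by linarith)) (hx k)
  have keyi : x i ^ q < x i * s ^ (q - 1) := by
    rw [pow_eq i]
    exact mul_lt_mul_of_pos_left (Real.rpow_lt_rpow (hx i) hxis (by linarith)) hxi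
  calc ∑ k, x k ^ q < ∑ k, x k * s ^ (q-1) :=
        Finset.sum_lt_sum (fun k _ => key k) ⟨i, Finset.mem_univ i, keyi⟩
    _ = s * s ^ (q-1) := by rw [← Finset.sum_mul]
    _ = s ^ q := by
        nth_rewrite 1 [← Real.rpow_one s]
        rw [← Real.rpow_add hspos]; norm_num

private lemma iIndepFun_ae_congr {Ω ι : Type*} [MeasurableSpace Ω] {μ : Measure Ω}
    {β : ι → Type*} {m : ∀ i, MeasurableSpace (β i)} {f g : ∀ i, Ω → β i}
    (hf : iIndepFun (m := m) f μ) (h : ∀ i, f i =ᵐ[μ] g i) : iIndepFun (m := m) g μ := by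
  rw [iIndepFun_iff_measure_inter_preimage_eq_mul] at hf ⊢
  intro S sets hsets
  have h1 : ∀ i (s : Set (β i)), f i ⁻¹' s =ᵐ[μ] g i ⁻¹' s := fun i s => by
    filter_upwards [h i] with ω hω
    show (ω ∈ f i ⁻¹' s) = (ω ∈ g i ⁻¹' s)
    simp only [Set.mem_preimage, hω]
  have hae : ∀ᵐ ω ∂μ, ∀ i : {i // i ∈ S}, f i.1 ω = g i.1 ω :=
    ae_all_iff.2 fun i => h i.1
  have h2 : (⋂ i ∈ S, f i ⁻¹' sets i) =ᵐ[μ] (⋂ i ∈ S, g i ⁻¹' sets i) := by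
    filter_upwards [hae] with ω hω
    show (ω ∈ ⋂ i ∈ S, f i ⁻¹' sets i) = (ω ∈ ⋂ i ∈ S, g i ⁻¹' sets i)
    simp only [Set.mem_iInter, Set.mem_preimage, eq_iff_iff]
    exact ⟨fun H i hi => by rw [← hω ⟨i, hi⟩]; exact H i hi,
           fun H i hi => by rw [hω ⟨i, hi⟩]; exact H i hi⟩
  rw [measure_congr h2.symm, hf S hsets]
  exact Finset.prod_congr rfl fun i _ => measure_congr (h1 i (sets i))
theorem stmt_18 {Ω : Type*} [MeasurableSpace Ω] (μ : Measure Ω) [IsProbabilityMeasure μ]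
    (ℓ : ℕ) (hℓ : 2 ≤ ℓ) (q : ℝ) (hq : 1 < q)
    (W Y : Ω → ℝ) (hWnn : ∀ ω, 0 ≤ W ω) (hYnn : ∀ ω, 0 ≤ Y ω)
    (hWexp : ∫ ω, W ω ∂μ = 1) (hWq : Integrable (fun ω => W ω ^ q) μ)
    (hYexp : ∫ ω, Y ω ∂μ = 1) (hYq : Integrable (fun ω => Y ω ^ q) μ)
    (hYqpos : 0 < ∫ ω, Y ω ^ q ∂μ)
    (Wf Zf : Fin ℓ → Ω → ℝ)
    (hind : iIndepFun (Sum.elim Wf Zf) μ)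
    (hWd : ∀ j, IdentDistrib (Wf j) W μ μ)
    (hZd : ∀ j, IdentDistrib (Zf j) Y μ μ)
    (heq : IdentDistrib (fun ω => (ℓ : ℝ) * Y ω) (fun ω => ∑ j, Wf j ω * Zf j ω) μ μ) :
    ∫ ω, W ω ^ q ∂μ < (ℓ : ℝ) ^ (q - 1) := by
  classical
  have hq1 : (1:ℝ) ≤ q := hq.le
  have h0ℓ : 0 < ℓ := by omega
  have h1ℓ : 1 < ℓ := by omega
  have hℓpos : (0:ℝ) < (ℓ:ℝ) := by exact_mod_cast h0ℓ
  have hWint : Integrable W μ := by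
    by_contra h
    rw [integral_undef h] at hWexp; norm_num at hWexp
  have hYint : Integrable Y μ := by
    by_contra h
    rw [integral_undef h] at hYexp; norm_num at hYexp
  have hrq : Measurable (fun x : ℝ => x ^ q) :=
    (Real.continuous_rpow_const (by linarith)).measurable
  -- measurable modifications
  have hAE : ∀ i : Fin ℓ ⊕ Fin ℓ, AEMeasurable (Sum.elim Wf Zf i) μ := by
    rintro (j | j)
    · exact (hWd j).aemeasurable_fst
    · exact (hZd j).aemeasurable_fst
  set F : Fin ℓ ⊕ Fin ℓ → Ω → ℝ := fun i => (hAE i).mk _ with hFdef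
  have hFmeas : ∀ i, Measurable (F i) := fun i => (hAE i).measurable_mk
  have hFae : ∀ i, Sum.elim Wf Zf i =ᵐ[μ] F i := fun i => (hAE i).ae_eq_mk
  have hindF : iIndepFun F μ := iIndepFun_ae_congr hind hFae
  set Wm : Fin ℓ → Ω → ℝ := fun j => F (Sum.inl j) with hWmdef
  set Zm : Fin ℓ → Ω → ℝ := fun j => F (Sum.inr j) with hZmdef
  have hWmd : ∀ j, IdentDistrib (Wm j) W μ μ := fun j =>
    ((IdentDistrib.of_ae_eq ((hWd j).aemeasurable_fst) (hFae (Sum.inl j))).symm).trans (hWd j)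
  have hZmd : ∀ j, IdentDistrib (Zm j) Y μ μ := fun j =>
    ((IdentDistrib.of_ae_eq ((hZd j).aemeasurable_fst) (hFae (Sum.inr j))).symm).trans (hZd j)
  have hWm_nn : ∀ j, ∀ᵐ ω ∂μ, 0 ≤ Wm j ω := fun j =>
    (hWmd j).symm.ae_snd (p := fun x : ℝ => 0 ≤ x) measurableSet_Ici
      (Filter.Eventually.of_forall hWnn)
  have hZm_nn : ∀ j, ∀ᵐ ω ∂μ, 0 ≤ Zm j ω := fun j =>
    (hZmd j).symm.ae_snd (p := fun x : ℝ => 0 ≤ x) measurableSet_Ici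
      (Filter.Eventually.of_forall hYnn)
  have hnn : ∀ᵐ ω ∂μ, ∀ i : Fin ℓ ⊕ Fin ℓ, 0 ≤ F i ω := by
    rw [ae_all_iff]; rintro (j | j)
    exacts [hWm_nn j, hZm_nn j]
  -- moments
  have hWmq_d : ∀ j, IdentDistrib (fun ω => Wm j ω ^ q) (fun ω => W ω ^ q) μ μ :=
    fun j => (hWmd j).comp hrq
  have hZmq_d : ∀ j, IdentDistrib (fun ω => Zm j ω ^ q) (fun ω => Y ω ^ q) μ μ :=
    fun j => (hZmd j).comp hrq
  have hWmq_int : ∀ j, Integrable (fun ω => Wm j ω ^ q) μ :=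
    fun j => (hWmq_d j).integrable_iff.2 hWq
  have hZmq_int : ∀ j, Integrable (fun ω => Zm j ω ^ q) μ :=
    fun j => (hZmq_d j).integrable_iff.2 hYq
  have hWm_int : ∀ j, Integrable (Wm j) μ := fun j => (hWmd j).integrable_iff.2 hWint
  have hZm_int : ∀ j, Integrable (Zm j) μ := fun j => (hZmd j).integrable_iff.2 hYint
  -- independence within a pair
  have hIndWZ : ∀ j, IndepFun (Wm j) (Zm j) μ := fun j =>
    hindF.indepFun (show (Sum.inl j : Fin ℓ ⊕ Fin ℓ) ≠ Sum.inr j by simp)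
  have hIndWZq : ∀ j, IndepFun (fun ω => Wm j ω ^ q) (fun ω => Zm j ω ^ q) μ := fun j =>
    (hIndWZ j).comp hrq hrq
  -- product terms
  have hprod_ae : ∀ j, (fun ω => (Wm j ω * Zm j ω) ^ q)
      =ᵐ[μ] fun ω => Wm j ω ^ q * Zm j ω ^ q := by
    intro j
    filter_upwards [hWm_nn j, hZm_nn j] with ω h1 h2
    exact Real.mul_rpow h1 h2
  have hterm_int : ∀ j, Integrable (fun ω => (Wm j ω * Zm j ω) ^ q) μ := fun j =>
    Integrable.congr ((hIndWZq j).integrable_mul (hWmq_int j) (hZmq_int j)) (hprod_ae j).symm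
  have hterm_integral : ∀ j, ∫ ω, (Wm j ω * Zm j ω) ^ q ∂μ
      = (∫ ω, W ω ^ q ∂μ) * ∫ ω, Y ω ^ q ∂μ := by
    intro j
    have hmul := (hIndWZq j).integral_mul_eq_mul_integral (hWmq_int j).1 (hZmq_int j).1
    rw [integral_congr_ae (hprod_ae j)]
    calc ∫ a, Wm j a ^ q * Zm j a ^ q ∂μ
        = (∫ ω, Wm j ω ^ q ∂μ) * ∫ ω, Zm j ω ^ q ∂μ := hmul
      _ = (∫ ω, W ω ^ q ∂μ) * ∫ ω, Y ω ^ q ∂μ := by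
          rw [(hWmq_d j).integral_eq, (hZmq_d j).integral_eq]
  -- the sum
  set g : Ω → ℝ := fun ω => ∑ j, Wm j ω * Zm j ω with hgdef
  have hsum_ae : (fun ω => ∑ j, Wf j ω * Zf j ω) =ᵐ[μ] g := by
    have h := ae_all_iff.2 hFae
    filter_upwards [h] with ω hω
    exact Finset.sum_congr rfl fun j _ => by
      rw [show Wf j ω = Wm j ω from hω (Sum.inl j),
        show Zf j ω = Zm j ω from hω (Sum.inr j)]
  have hsum_aemeas : AEMeasurable (fun ω => ∑ j, Wf j ω * Zf j ω) μ :=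
    Finset.aemeasurable_fun_sum _ fun j _ =>
      ((hWd j).aemeasurable_fst.mul (hZd j).aemeasurable_fst)
  have heq' : IdentDistrib (fun ω => (ℓ:ℝ) * Y ω) g μ μ :=
    heq.trans (IdentDistrib.of_ae_eq hsum_aemeas hsum_ae)
  have heq'q : IdentDistrib (fun ω => ((ℓ:ℝ) * Y ω) ^ q) (fun ω => g ω ^ q) μ μ :=
    heq'.comp hrq
  have hLfun : (fun ω => ((ℓ:ℝ) * Y ω) ^ q) = fun ω => (ℓ:ℝ) ^ q * Y ω ^ q :=
    funext fun ω => Real.mul_rpow hℓpos.le (hYnn ω)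
  have hL_int : Integrable (fun ω => ((ℓ:ℝ) * Y ω) ^ q) μ := by
    rw [hLfun]; exact hYq.const_mul _
  have hgq_int : Integrable (fun ω => g ω ^ q) μ := heq'q.integrable_iff.1 hL_int
  have hL_val : ∫ ω, ((ℓ:ℝ) * Y ω) ^ q ∂μ = (ℓ:ℝ) ^ q * ∫ ω, Y ω ^ q ∂μ := by
    rw [hLfun, integral_const_mul]
  -- f : sum of q-th powers
  set f : Ω → ℝ := fun ω => ∑ j, (Wm j ω * Zm j ω) ^ q with hfdef
  have hf_int : Integrable f μ := integrable_finset_sum _ fun j _ => hterm_int j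
  have hf_val : ∫ ω, f ω ∂μ = (ℓ:ℝ) * ((∫ ω, W ω ^ q ∂μ) * ∫ ω, Y ω ^ q ∂μ) := by
    rw [hfdef]
    rw [integral_finset_sum _ fun j _ => hterm_int j]
    simp only [hterm_integral]
    rw [Finset.sum_const, Finset.card_univ, Fintype.card_fin, nsmul_eq_mul]
  -- weak a.e. inequality
  have hle : f ≤ᵐ[μ] fun ω => g ω ^ q := by
    filter_upwards [hnn] with ω hω
    exact sum_rpow_le_rpow_sum hq1 (fun j => Wm j ω * Zm j ω)
      (fun j => mul_nonneg (hω (Sum.inl j)) (hω (Sum.inr j)))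
  -- positive measure of the strictness set
  set i0 : Fin ℓ := ⟨0, h0ℓ⟩ with hi0def
  set i1 : Fin ℓ := ⟨1, h1ℓ⟩ with hi1def
  have hX_pos : ∀ j, 0 < μ ((fun ω => Wm j ω * Zm j ω) ⁻¹' Set.Ioi 0) := by
    intro j
    rcases eq_or_lt_of_le (zero_le : (0:ENNReal) ≤ μ ((fun ω => Wm j ω * Zm j ω) ⁻¹' Set.Ioi 0)) with hc | hc
    swap
    · exact hc
    exfalso
    have h1 : ∀ᵐ ω ∂μ, ¬ (0 < Wm j ω * Zm j ω) := by
      rw [ae_iff]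
      simp only [not_not]; exact hc.symm
    have hzero : (fun ω => Wm j ω * Zm j ω) =ᵐ[μ] (fun _ => (0:ℝ)) := by
      filter_upwards [h1, hWm_nn j, hZm_nn j] with ω ha hb hc'
      have h2 := mul_nonneg hb hc'
      have h3 := not_lt.1 ha
      linarith
    have hval : ∫ ω, Wm j ω * Zm j ω ∂μ = 1 := by
      have hmul := (hIndWZ j).integral_mul_eq_mul_integral (hWm_int j).1 (hZm_int j).1
      calc ∫ ω, Wm j ω * Zm j ω ∂μ
          = (∫ ω, Wm j ω ∂μ) * ∫ ω, Zm j ω ∂μ := hmul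
        _ = 1 := by rw [(hWmd j).integral_eq, (hZmd j).integral_eq, hWexp, hYexp, mul_one]
    rw [integral_congr_ae hzero, integral_zero] at hval
    norm_num at hval
  have hIndPair : IndepFun (fun ω => Wm i0 ω * Zm i0 ω) (fun ω => Wm i1 ω * Zm i1 ω) μ := by
    have h01 : i0 ≠ i1 := by simp [hi0def, hi1def, Fin.ext_iff]
    have := hindF.indepFun_mul_mul hFmeas (Sum.inl i0) (Sum.inr i0) (Sum.inl i1) (Sum.inr i1)
      (by simp [h01]) (by simp) (by simp) (by simp [h01])
    exact this
  set A : Set Ω := (fun ω => Wm i0 ω * Zm i0 ω) ⁻¹' Set.Ioi 0 ∩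
      (fun ω => Wm i1 ω * Zm i1 ω) ⁻¹' Set.Ioi 0 with hAdef
  have hA_pos : 0 < μ A := by
    rw [hAdef, hIndPair.measure_inter_preimage_eq_mul _ _ measurableSet_Ioi measurableSet_Ioi]
    exact ENNReal.mul_pos (hX_pos i0).ne' (hX_pos i1).ne'
  -- f is not a.e. equal to g^q
  have hne : ¬ (f =ᵐ[μ] fun ω => g ω ^ q) := by
    intro hfg
    have hnotin : ∀ᵐ ω ∂μ, ω ∉ A := by
      filter_upwards [hfg, hnn] with ω h1 h2
      intro hmem
      have hi0' : 0 < Wm i0 ω * Zm i0 ω := hmem.1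
      have hi1' : 0 < Wm i1 ω * Zm i1 ω := hmem.2
      have h01 : i0 ≠ i1 := by simp [hi0def, hi1def, Fin.ext_iff]
      have hlt := sum_rpow_lt_rpow_sum hq (fun j => Wm j ω * Zm j ω)
        (fun j => mul_nonneg (h2 (Sum.inl j)) (h2 (Sum.inr j))) h01 hi0' hi1'
      exact ne_of_lt hlt h1
    rw [ae_iff] at hnotin
    simp only [not_not] at hnotin
    rw [Set.setOf_mem_eq] at hnotin
    exact hA_pos.ne' hnotin
  -- strict integral inequality
  have hdiff_nonneg : 0 ≤ᵐ[μ] fun ω => g ω ^ q - f ω := by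
    filter_upwards [hle] with ω h
    simpa using h
  have hdiff_int : Integrable (fun ω => g ω ^ q - f ω) μ := hgq_int.sub hf_int
  have hdiff_ne : ∫ ω, (g ω ^ q - f ω) ∂μ ≠ 0 := by
    intro h0
    have hz := (integral_eq_zero_iff_of_nonneg_ae hdiff_nonneg hdiff_int).1 h0
    refine hne ?_
    filter_upwards [hz] with ω hω
    have : g ω ^ q - f ω = 0 := hω
    linarith
  have hlt : ∫ ω, f ω ∂μ < ∫ ω, g ω ^ q ∂μ := by
    have h1 : 0 ≤ ∫ ω, (g ω ^ q - f ω) ∂μ := integral_nonneg_of_ae hdiff_nonneg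
    have h2 : ∫ ω, (g ω ^ q - f ω) ∂μ = ∫ ω, g ω ^ q ∂μ - ∫ ω, f ω ∂μ :=
      integral_sub hgq_int hf_int
    have h3 := lt_of_le_of_ne h1 (Ne.symm hdiff_ne)
    linarith
  have hginteg : ∫ ω, g ω ^ q ∂μ = (ℓ:ℝ) ^ q * ∫ ω, Y ω ^ q ∂μ := by
    rw [← heq'q.integral_eq, hL_val]
  rw [hf_val, hginteg] at hlt
  have hpow : (ℓ:ℝ) ^ q = (ℓ:ℝ) ^ (q-1) * (ℓ:ℝ) := by
    rw [show (ℓ:ℝ)^(q-1) * (ℓ:ℝ) = (ℓ:ℝ)^(q-1) * (ℓ:ℝ)^(1:ℝ) by rw [Real.rpow_one],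
      ← Real.rpow_add hℓpos]
    norm_num
  rw [hpow] at hlt
  by_contra hcon
  push_neg at hcon
  nlinarith [mul_pos hℓpos hYqpos, hlt, hcon]
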